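/- Let A be a Cevian arrangement of apical hyperplanes over a point basis N̂ of a projective geometry P, with associated graph Γ = (N, E) and rank function rk_P(S) := codim ⋂_{e∈S} h(ê). If an edge set S ⊆ E has a pendant edge e (a link of S one of whose endpoints is incident with no other edge of S), then rk_P(S) = rk_P(S∖e) + 1. -/
import Mathlib


open scoped Classical

/-! ## Graphs with parallel links and half edges -/

/-- A multigraph: each edge has a finite set of endpoints
(one endpoint for a half edge, two endpoints for a link). -/
structure MGraph (N : Type*) (E : Type*) where
  ends : E → Finset N

namespace MGraph

variable {N E : Type*} (G : MGraph N E)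

/-- A link has two distinct endpoints. -/
def IsLink (e : E) : Prop := (G.ends e).card = 2

/-- A half edge has exactly one endpoint. -/
def IsHalfEdge (e : E) : Prop := (G.ends e).card = 1

/-- The set of nodes of a set of edges. -/
def nodeSet (S : Set E) : Set N := {v | ∃ e ∈ S, v ∈ G.ends e}

/-- The nodes of a finite set of edges. -/
noncomputable def nodesOf (S : Finset E) : Finset N := S.biUnion G.ends

/-- The degree of a node in a finite edge set. -/
noncomputable def degreeIn (S : Finset E) (v : N) : ℕ :=
  (S.filter (fun e => v ∈ G.ends e)).card

/-- Two nodes joined by an edge of `S`. -/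
def adjIn (S : Set E) (u v : N) : Prop := ∃ e ∈ S, u ∈ G.ends e ∧ v ∈ G.ends e

/-- Connectivity of nodes through edges of `S`. -/
def nodeConn (S : Set E) : N → N → Prop := Relation.ReflTransGen (G.adjIn S)

/-- The components of the spanning subgraph `(N, S)`, as sets of nodes. -/
def components (S : Set E) : Set (Set N) := {W | ∃ v : N, W = {u | G.nodeConn S u v}}

/-- The number of components of the spanning subgraph `(N, S)`. -/
noncomputable def numComponents (S : Set E) : ℕ := Nat.card ↥(G.components S)

/-- The components of the non-spanning subgraph `(N(S), S)`. -/
def componentsOn (S : Set E) : Set (Set N) :=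
  {W | ∃ v ∈ G.nodeSet S, W = {u | G.nodeConn S u v}}

/-- The edges of `S` whose endpoints all lie in a node set `W`. -/
def edgesIn (S : Set E) (W : Set N) : Set E := {e | e ∈ S ∧ ∀ v ∈ G.ends e, v ∈ W}

/-- An edge set is connected if any two of its edges are joined through
consecutively intersecting edges of the set. -/
def ConnEdges (S : Set E) : Prop :=
  ∀ e ∈ S, ∀ f ∈ S, Relation.ReflTransGen
    (fun a b => a ∈ S ∧ b ∈ S ∧ ∃ v : N, v ∈ G.ends a ∧ v ∈ G.ends b) e f

/-- A circle: the edge set of a connected subgraph in which every node has degree 2. -/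
def IsCircle (C : Finset E) : Prop :=
  C.Nonempty ∧ (∀ e ∈ C, G.IsLink e) ∧ G.ConnEdges ↑C ∧
    ∀ v ∈ G.nodesOf C, G.degreeIn C v = 2

/-- A (simple, open) path joining two distinct nodes `u` and `v`. -/
def IsPath (Q : Finset E) (u v : N) : Prop :=
  Q.Nonempty ∧ u ≠ v ∧ (∀ e ∈ Q, G.IsLink e) ∧ G.ConnEdges ↑Q ∧
    u ∈ G.nodesOf Q ∧ v ∈ G.nodesOf Q ∧
    G.degreeIn Q u = 1 ∧ G.degreeIn Q v = 1 ∧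
    ∀ w ∈ G.nodesOf Q, w ≠ u → w ≠ v → G.degreeIn Q w = 2

/-- A simple graph: all edges are links and no two edges have the same endpoints. -/
def IsSimple : Prop := (∀ e : E, G.IsLink e) ∧ Function.Injective G.ends

/-- The graph is connected. -/
def IsConnected : Prop := ∀ u v : N, G.nodeConn Set.univ u v

/-- Inseparable graph: connected, and for every partition of the edge set into two
nonempty parts the two parts share at least two nodes. -/
def IsInseparable : Prop :=
  G.IsConnected ∧ ∀ A B : Set E, A.Nonempty → B.Nonempty → Disjoint A B →
    A ∪ B = Set.univ → ∃ u v : N, u ≠ v ∧ u ∈ G.nodeSet A ∧ u ∈ G.nodeSet B ∧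
      v ∈ G.nodeSet A ∧ v ∈ G.nodeSet B

/-- A linear class of circles: every member is a circle and no theta subgraph (the
union of three pairwise internally disjoint paths with the same two endpoints)
contains exactly two members of the class. -/
def IsLinearClass (B : Set (Finset E)) : Prop :=
  (∀ C ∈ B, G.IsCircle C) ∧
  ∀ u v : N, ∀ P₁ P₂ P₃ : Finset E,
    G.IsPath P₁ u v → G.IsPath P₂ u v → G.IsPath P₃ u v →
    Disjoint P₁ P₂ → Disjoint P₁ P₃ → Disjoint P₂ P₃ →
    (↑(G.nodesOf P₁) ∩ ↑(G.nodesOf P₂) : Set N) = {u, v} →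
    (↑(G.nodesOf P₁) ∩ ↑(G.nodesOf P₃) : Set N) = {u, v} →
    (↑(G.nodesOf P₂) ∩ ↑(G.nodesOf P₃) : Set N) = {u, v} →
    P₁ ∪ P₂ ∈ B → P₁ ∪ P₃ ∈ B → P₂ ∪ P₃ ∈ B

/-- A balanced edge set with respect to a class `B` of balanced circles:
no half edges, and every circle inside it belongs to `B`. -/
def IsBalancedSet (B : Set (Finset E)) (S : Set E) : Prop :=
  (∀ e ∈ S, G.IsLink e) ∧ ∀ C : Finset E, ↑C ⊆ S → G.IsCircle C → C ∈ B

/-- The number of balanced components of the spanning subgraph `(N, S)`. -/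
noncomputable def numBalComponents (B : Set (Finset E)) (S : Set E) : ℕ :=
  Nat.card ↥{W : Set N | W ∈ G.components S ∧ G.IsBalancedSet B (G.edgesIn S W)}

/-- Frame matroid rank function: `rk S = #N - b(S)`. -/
noncomputable def frameRk [Fintype N] (B : Set (Finset E)) (S : Set E) : ℕ :=
  Fintype.card N - G.numBalComponents B S

/-- Graphic (cycle) matroid rank function: `rk S = #N - c(S)`. -/
noncomputable def graphicRk [Fintype N] (S : Set E) : ℕ :=
  Fintype.card N - G.numComponents S

/-- Graphic matroid rank of a finite edge set, computed inside its own node set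
(valid also for infinite graphs): `rk S = #N(S) - c(N(S), S)`. -/
noncomputable def graphicRkOn (S : Finset E) : ℕ :=
  (G.nodesOf S).card - Nat.card ↥(G.componentsOn ↑S)

/-- Extended lift matroid rank function on `E ⊕ Unit`, where `Sum.inr ()` is the
extra point `e₀`: `rk S = #N - c(S ∩ E)` if `S ⊆ E` is balanced, and
`#N - c(S ∩ E) + 1` if `S` is unbalanced or contains `e₀`. -/
noncomputable def liftRk [Fintype N] (B : Set (Finset E)) (S : Set (E ⊕ Unit)) : ℕ :=
  if G.IsBalancedSet B {e | Sum.inl e ∈ S} ∧ Sum.inr () ∉ S then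
    Fintype.card N - G.numComponents {e | Sum.inl e ∈ S}
  else Fintype.card N - G.numComponents {e | Sum.inl e ∈ S} + 1

/-- Closed sets of the frame matroid (via the rank function; the matroid is finitary). -/
def FrameClosed [Fintype N] (B : Set (Finset E)) (S : Set E) : Prop :=
  ∀ e : E, (∃ S₀ : Finset E, ↑S₀ ⊆ S ∧
    G.frameRk B ↑(insert e S₀) = G.frameRk B ↑S₀) → e ∈ S

/-- Closed sets of the extended lift matroid. -/
def LiftClosed [Fintype N] (B : Set (Finset E)) (S : Set (E ⊕ Unit)) : Prop :=
  ∀ x : E ⊕ Unit, (∃ S₀ : Finset (E ⊕ Unit), ↑S₀ ⊆ S ∧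
    G.liftRk B ↑(insert x S₀) = G.liftRk B ↑S₀) → x ∈ S

/-- The balance-closure of an edge set. -/
def bcl (B : Set (Finset E)) (S : Set E) : Set E :=
  S ∪ {e | ∃ C ∈ B, e ∈ C ∧ ↑C ⊆ S ∪ {e}}

/-- The subgraph of all links, as a graph on the same nodes. -/
def linkGraph : MGraph N {e : E // G.IsLink e} := ⟨fun e => G.ends e.val⟩

/-- Restriction of a class of circles to the subgraph of links. -/
def linkBal (B : Set (Finset E)) : Set (Finset {e : E // G.IsLink e}) :=
  {C | C.image Subtype.val ∈ B}

/-- The subgraph on a subset of the edges (spanning all nodes). -/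
def sub (D : Set E) : MGraph N ↥D := ⟨fun f => G.ends f.val⟩

end MGraph

/-- A graph together with a distinguished class of "balanced" circles.
(It is a biased graph when the class is a linear class.) -/
structure BiasedGraph (N E : Type*) extends MGraph N E where
  Bal : Set (Finset E)

/-- The complete graph on a node set `N`. -/
def completeMGraph (N : Type*) : MGraph N {q : Finset N // q.card = 2} := ⟨Subtype.val⟩

/-- A gain graph with gain group `Γ`: each edge is given by a source, a target
(equal for a half edge) and a gain in the direction from source to target. -/
structure GainGraph (N E : Type*) (Γ : Type*) [Group Γ] extends MGraph N E where
  src : E → N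
  tgt : E → N
  gain : E → Γ
  ends_eq : ∀ e : E, ends e = {src e, tgt e}

namespace GainGraph

variable {N E Γ : Type*} [Group Γ] (Φ : GainGraph N E Γ)

/-- The gain of an edge in the direction from `u` to `v`. -/
noncomputable def ogain (e : E) (u v : N) : Γ :=
  if Φ.src e = u ∧ Φ.tgt e = v then Φ.gain e else (Φ.gain e)⁻¹

/-- A balanced circle of a gain graph: a circle whose gain function is given by a
potential on the nodes (equivalently, the product of its gains along a cyclic
orientation is the identity). -/
def BalancedCircle (C : Finset E) : Prop :=
  Φ.toMGraph.IsCircle C ∧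
    ∃ θ : N → Γ, ∀ e ∈ C, Φ.gain e = (θ (Φ.src e))⁻¹ * θ (Φ.tgt e)

/-- The biased graph `⟨Φ⟩` of a gain graph. -/
def biasedGraph : BiasedGraph N E := { Φ.toMGraph with Bal := {C | Φ.BalancedCircle C} }

end GainGraph

/-- A biased expansion of a graph `Δ` along a projection `p`: `p` is surjective,
preserves endpoints, and every circle of `Δ` with a chosen lift of all but one of
its edges has a unique completion to a balanced circle. -/
def IsBiasedExpansion {N E E' : Type*} (G : MGraph N E) (B : Set (Finset E))
    (Δ : MGraph N E') (p : E → E') : Prop :=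
  Function.Surjective p ∧ (∀ e : E, G.ends e = Δ.ends (p e)) ∧
  ∀ C : Finset E', Δ.IsCircle C → ∀ e₀ ∈ C, ∀ s : E' → E,
    (∀ f ∈ C.erase e₀, p (s f) = f) →
    ∃! t : E, p t = e₀ ∧ (C.erase e₀).image s ∪ {t} ∈ B

/-! ## Axiomatic (synthetic) projective geometry -/

/-- An axiomatic projective geometry: a point set with a line through any two
points, unique when the points are distinct, every line having at least three
points, and satisfying the Veblen–Young axiom. -/
structure ProjGeom (P : Type*) where
  line : P → P → Set P
  line_self : ∀ p : P, line p p = {p}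
  line_symm : ∀ p q : P, line p q = line q p
  left_mem_line : ∀ p q : P, p ∈ line p q
  right_mem_line : ∀ p q : P, q ∈ line p q
  line_unique : ∀ p q x y : P, p ≠ q → x ∈ line p q → y ∈ line p q → x ≠ y →
    line x y = line p q
  exists_third : ∀ p q : P, p ≠ q → ∃ r ∈ line p q, r ≠ p ∧ r ≠ q
  veblen : ∀ p q r s x : P, p ≠ q → r ≠ s → p ≠ r → q ≠ s →
    x ∈ line p q → x ∈ line r s → ∃ y, y ∈ line p r ∧ y ∈ line q s

namespace ProjGeom

variable {P : Type*} (G : ProjGeom P)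

/-- A flat (subspace): a line-closed set of points. -/
def IsFlat (t : Set P) : Prop := ∀ p ∈ t, ∀ q ∈ t, G.line p q ⊆ t

/-- The span of a point set: the smallest flat containing it. -/
def span (A : Set P) : Set P := ⋂₀ {t : Set P | G.IsFlat t ∧ A ⊆ t}

/-- An independent point set: no point is in the span of the others. -/
def Indep (A : Set P) : Prop := ∀ a ∈ A, a ∉ G.span (A \ {a})

/-- The (matroid) rank of a point set: the largest cardinality of a finite
independent subset. -/
noncomputable def rank (A : Set P) : ℕ :=
  sSup {n : ℕ | ∃ B : Finset P, ↑B ⊆ A ∧ G.Indep ↑B ∧ B.card = n}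

/-- A hyperplane: a maximal proper flat. -/
def IsHyperplane (h : Set P) : Prop :=
  G.IsFlat h ∧ h ≠ Set.univ ∧ ∀ t : Set P, G.IsFlat t → h ⊆ t → t = h ∨ t = Set.univ

/-- The codimension of a flat: the least number of hyperplanes intersecting in it. -/
noncomputable def codim (t : Set P) : ℕ :=
  sInf {n : ℕ | ∃ H : Finset (Set P), H.card = n ∧ (∀ h ∈ H, G.IsHyperplane h) ∧
    ⋂₀ ↑H = t}

variable {N : Type*}

/-- A cross-flat with respect to an independent family `ν`: a flat containing
none of the points `ν v`. -/
def crossFlat (ν : N → P) (t : Set P) : Prop := G.IsFlat t ∧ ∀ v : N, ν v ∉ t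

/-- The union of all edge lines of the independent family `ν`. -/
def edgeLineUnion (ν : N → P) : Set P :=
  ⋃ (v : N) (w : N) (_ : v ≠ w), G.line (ν v) (ν w)

/-! ### The Menelaean (point) construction for the frame matroid -/

/-- The underlying graph of the Menelaean construction `Ω(N̂, Ehat)`: a point of `Ehat`
in `N̂` is a half edge, any other point is a link joining the ends of its edge line. -/
noncomputable def menGraph (ν : N → P) (Ehat : Set P)
    (hE : ∀ x ∈ Ehat, x ∉ Set.range ν →
      ∃ pr : N × N, pr.1 ≠ pr.2 ∧ x ∈ G.line (ν pr.1) (ν pr.2)) :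
    MGraph N ↥Ehat where
  ends e :=
    if h : (e : P) ∈ Set.range ν then {(show ∃ v : N, ν v = ↑e from h).choose}
    else {(hE e e.2 h).choose.1, (hE e e.2 h).choose.2}

/-- The balanced circles of the Menelaean construction: circles whose point set
lies in a cross-flat. -/
noncomputable def menBal (ν : N → P) (Ehat : Set P)
    (hE : ∀ x ∈ Ehat, x ∉ Set.range ν →
      ∃ pr : N × N, pr.1 ≠ pr.2 ∧ x ∈ G.line (ν pr.1) (ν pr.2)) :
    Set (Finset ↥Ehat) :=
  {C | (G.menGraph ν Ehat hE).IsCircle C ∧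
    ∃ t : Set P, G.crossFlat ν t ∧ ∀ e ∈ C, (e : P) ∈ t}

/-! ### The Cevian (hyperplane) construction for the frame matroid -/

/-- A Cevian arrangement over the point basis `ν`, described by its associated
graph `Γ` and its apex function: a link `e` with endpoints `v, w` has its apex on
the edge line `v̂ŵ`, off the basis; a half edge at `v` has apex `ν v`. -/
def IsCevian {E : Type*} (ν : N → P) (Γ : MGraph N E) (apex : E → P) : Prop :=
  ∀ e : E,
    (∃ v w : N, v ≠ w ∧ Γ.ends e = ({v, w} : Finset N) ∧
      apex e ∈ G.line (ν v) (ν w) ∧ apex e ∉ Set.range ν) ∨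
    (∃ v : N, Γ.ends e = ({v} : Finset N) ∧ apex e = ν v)

/-- The apical hyperplane of an edge of a Cevian arrangement. -/
def cevHyp {E : Type*} (ν : N → P) (Γ : MGraph N E) (apex : E → P) (e : E) : Set P :=
  if Γ.IsLink e then G.span ((ν '' {u : N | u ∉ Γ.ends e}) ∪ {apex e})
  else G.span (ν '' {u : N | u ∉ Γ.ends e})

/-- The rank function of a Cevian arrangement:
the codimension of the intersection of the corresponding apical hyperplanes. -/
noncomputable def cevRk {E : Type*} (ν : N → P) (Γ : MGraph N E) (apex : E → P)
    (S : Finset E) : ℕ :=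
  G.codim (⋂ e ∈ S, G.cevHyp ν Γ apex e)

/-- The balanced circles of a Cevian arrangement:
circles of deficient hyperplane-intersection rank. -/
noncomputable def cevBal {E : Type*} (ν : N → P) (Γ : MGraph N E) (apex : E → P) :
    Set (Finset E) :=
  {C | Γ.IsCircle C ∧ G.cevRk ν Γ apex C < C.card}

/-! ### The orthographic (point) construction for the lift matroid -/

/-- The projection of the orthographic construction: each point of `Ehat` lies on the
edge line `z'(f)e₀` of a unique edge `f` of `Δ`. -/
noncomputable def orthoProj {E' : Type*} (z' : E' → P) (e₀ : P) (Ehat : Set P)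
    (hE : ∀ x ∈ Ehat, ∃ f : E', x ∈ G.line (z' f) e₀) : ↥Ehat → E' :=
  fun e => (hE e e.2).choose

/-- The underlying graph of the orthographic construction `Ω₀(Ehat)`. -/
noncomputable def orthoGraph {E' : Type*} (Δ : MGraph N E') (z' : E' → P) (e₀ : P)
    (Ehat : Set P) (hE : ∀ x ∈ Ehat, ∃ f : E', x ∈ G.line (z' f) e₀) : MGraph N ↥Ehat :=
  ⟨fun e => Δ.ends (G.orthoProj z' e₀ Ehat hE e)⟩

/-- The balanced circles of the orthographic construction:
circles spanning a cross-flat (a flat not containing `e₀`). -/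
noncomputable def orthoBal {E' : Type*} (Δ : MGraph N E') (z' : E' → P) (e₀ : P)
    (Ehat : Set P) (hE : ∀ x ∈ Ehat, ∃ f : E', x ∈ G.line (z' f) e₀) : Set (Finset ↥Ehat) :=
  {C | (G.orthoGraph Δ z' e₀ Ehat hE).IsCircle C ∧
    e₀ ∉ G.span (Subtype.val '' (↑C : Set ↥Ehat))}

end ProjGeom

/-! ### Synthetic affinographic arrangements -/

/-- A synthetic affinographic arrangement of hyperplanes in the affine geometry
obtained from the projective geometry `G` by deleting the ideal hyperplane `hinf`:
a family of hyperplanes `hP e` (given by their projective completions, with affine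
parts `hP e \ hinf`), with parallel classes indexed by the edges of a graph `Δ` with
links only via the surjection `π`; hyperplanes in the class of `f` have common
ideal part `ideal f`, and the matroid of the ideal parts (rank = codimension inside
`hinf`) is the graphic matroid of `Δ`. -/
def IsAffinographic {P N E E' : Type*} [Fintype N] (G : ProjGeom P) (hinf : Set P)
    (hP : E → Set P) (Δ : MGraph N E') (π : E → E') (ideal : E' → Set P) : Prop :=
  G.IsHyperplane hinf ∧ (∀ f : E', Δ.IsLink f) ∧ Function.Surjective π ∧
  Function.Injective hP ∧ Function.Injective ideal ∧
  (∀ e : E, G.IsHyperplane (hP e) ∧ hP e ≠ hinf ∧ hP e ∩ hinf = ideal (π e)) ∧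
  ∀ S : Finset E', Δ.graphicRk (↑S : Set E') = G.codim (hinf ∩ ⋂ f ∈ S, ideal f) - 1

/-- The underlying graph of the biased graph `Ω(A)` of an affinographic
arrangement: each edge of `Δ` is replaced by the edges of its parallel class. -/
def affinoGraph {N E E' : Type*} (Δ : MGraph N E') (π : E → E') : MGraph N E :=
  ⟨fun e => Δ.ends (π e)⟩

/-- The affine intersection `t_A(S)` of the hyperplanes of `S`. -/
def affInter {P E : Type*} (hinf : Set P) (hP : E → Set P) (S : Set E) : Set P :=
  ⋂ e ∈ S, (hP e \ hinf)

/-- The balanced circles of `Ω(A)`: digons over a single edge of `Δ` are unbalanced;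
any other circle is balanced iff its affine intersection is nonempty. -/
def affinoBal {P N E E' : Type*} (_G : ProjGeom P) (hinf : Set P) (hP : E → Set P)
    (Δ : MGraph N E') (π : E → E') : Set (Finset E) :=
  {C | (affinoGraph Δ π).IsCircle C ∧ ¬(∃ f : E', ∀ e ∈ C, π e = f) ∧
    (affInter hinf hP ↑C).Nonempty}

/-! ### Coordinatized projective spaces -/

/-- The rank of a finite set of points of a coordinatized projective space:
the dimension of the linear span of representative vectors. -/
noncomputable def projRank (F : Type*) {V : Type*} [DivisionRing F] [AddCommGroup V]
    [Module F V] (A : Finset (Projectivization F V)) : ℕ :=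
  Module.finrank F ↥(Submodule.span F (Projectivization.rep '' (↑A : Set (Projectivization F V))))

/-- The edge set of the full biased graph `Ω^•`: the edges of `Ω` together with a
new half edge at every node not already supporting one. -/
def FullE {N E : Type*} (Ω : BiasedGraph N E) : Type _ :=
  E ⊕ {v : N // ∀ e : E, Ω.ends e ≠ ({v} : Finset N)}

/-- The underlying graph of the full biased graph `Ω^•`. -/
def fullGraph {N E : Type*} (Ω : BiasedGraph N E) : MGraph N (FullE Ω) :=
  ⟨Sum.elim Ω.ends (fun v => {v.val})⟩

/-- The balanced circles of the full biased graph `Ω^•` (circles avoid half edges). -/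
def fullBal {N E : Type*} (Ω : BiasedGraph N E) : Set (Finset (FullE Ω)) :=
  {C | ∃ C₀ ∈ Ω.Bal, C = C₀.image Sum.inl}

/-! ## Auxiliary lemmas for Statement 8 -/

namespace ProjGeom

variable {P : Type*} (G : ProjGeom P)

lemma line_eq_of_mem {x a p : P} (hp : p ∈ G.line x a) (hpx : p ≠ x) :
    G.line x p = G.line x a := by
  rcases eq_or_ne x a with rfl | hxa
  · rw [G.line_self] at hp
    exact absurd hp hpx
  · exact G.line_unique x a x p hxa (G.left_mem_line x a) hp (Ne.symm hpx)

lemma isFlat_inter {s t : Set P} (hs : G.IsFlat s) (ht : G.IsFlat t) :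
    G.IsFlat (s ∩ t) :=
  fun p hp q hq => Set.subset_inter (hs p hp.1 q hq.1) (ht p hp.2 q hq.2)

lemma isFlat_sInter {T : Set (Set P)} (hT : ∀ t ∈ T, G.IsFlat t) :
    G.IsFlat (⋂₀ T) :=
  fun p hp q hq y hy => Set.mem_sInter.2 fun t ht =>
    hT t ht p (Set.mem_sInter.1 hp t ht) q (Set.mem_sInter.1 hq t ht) hy

lemma isFlat_biInter {ι : Type*} {s : Finset ι} {f : ι → Set P}
    (h : ∀ i ∈ s, G.IsFlat (f i)) : G.IsFlat (⋂ i ∈ s, f i) := by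
  intro p hp q hq y hy
  simp only [Set.mem_iInter] at hp hq ⊢
  intro i hi
  exact h i hi p (hp i hi) q (hq i hi) hy

lemma subset_span (A : Set P) : A ⊆ G.span A :=
  fun _ hx => Set.mem_sInter.2 fun _ ht => ht.2 hx

lemma isFlat_span (A : Set P) : G.IsFlat (G.span A) :=
  G.isFlat_sInter fun _ ht => ht.1

lemma span_le {A t : Set P} (ht : G.IsFlat t) (h : A ⊆ t) : G.span A ⊆ t :=
  Set.sInter_subset_of_mem ⟨ht, h⟩

lemma span_mono {A B : Set P} (h : A ⊆ B) : G.span A ⊆ G.span B :=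
  G.span_le (G.isFlat_span B) (h.trans (G.subset_span B))

lemma span_span_union (A B : Set P) : G.span (G.span A ∪ B) = G.span (A ∪ B) := by
  apply Set.Subset.antisymm
  · exact G.span_le (G.isFlat_span _) (Set.union_subset
      (G.span_le (G.isFlat_span _) ((Set.subset_union_left).trans (G.subset_span _)))
      ((Set.subset_union_right).trans (G.subset_span _)))
  · exact G.span_mono (Set.union_subset_union_left B (G.subset_span A))

/-- One-step span: the span of a flat plus a point is the cone over the flat. -/
lemma span_flat_union_singleton {t : Set P} (ht : G.IsFlat t) (x : P) :
    G.span (t ∪ {x}) = {x} ∪ ⋃ a ∈ t, G.line x a := by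
  set C : Set P := {x} ∪ ⋃ a ∈ t, G.line x a with hC
  have hmemC : ∀ y : P, y ∈ C ↔ y = x ∨ ∃ a ∈ t, y ∈ G.line x a := by
    intro y; simp [hC]
  have htC : t ⊆ C := fun a ha => (hmemC a).2 (Or.inr ⟨a, ha, G.right_mem_line x a⟩)
  have hxC : x ∈ C := (hmemC x).2 (Or.inl rfl)
  by_cases hxt : x ∈ t
  · have h1 : C = t := by
      apply Set.Subset.antisymm _ htC
      intro y hy
      rcases (hmemC y).1 hy with rfl | ⟨a, hat, hya⟩
      · exact hxt
      · exact ht x hxt a hat hya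
    rw [h1]
    exact Set.Subset.antisymm (G.span_le ht (Set.union_subset subset_rfl
      (Set.singleton_subset_iff.2 hxt))) ((Set.subset_union_left).trans (G.subset_span _))
  have hflatC : G.IsFlat C := by
    intro p hp q hq y hy
    by_cases hyp : y = p
    · exact hyp ▸ hp
    by_cases hyq : y = q
    · exact hyq ▸ hq
    by_cases hpq : p = q
    · subst hpq
      rw [G.line_self] at hy
      exact absurd hy hyp
    by_cases hyx : y = x
    · exact hyx ▸ hxC
    by_cases hpx : p = x
    · subst hpx
      rcases (hmemC q).1 hq with rfl | ⟨b, hbt, hqb⟩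
      · exact absurd rfl hpq
      · have hqx : q ≠ p := fun h => hpq h.symm
        have hy2 : y ∈ G.line p b := by
          rw [← G.line_eq_of_mem hqb hqx]
          exact hy
        exact (hmemC y).2 (Or.inr ⟨b, hbt, hy2⟩)
    by_cases hqx : q = x
    · subst hqx
      rcases (hmemC p).1 hp with rfl | ⟨a, hat, hpa⟩
      · exact absurd rfl hpq
      · have hy2 : y ∈ G.line q a := by
          rw [← G.line_eq_of_mem hpa hpx, G.line_symm]
          exact hy
        exact (hmemC y).2 (Or.inr ⟨a, hat, hy2⟩)
    obtain ⟨a, hat, hpa⟩ := ((hmemC p).1 hp).resolve_left hpx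
    obtain ⟨b, hbt, hqb⟩ := ((hmemC q).1 hq).resolve_left hqx
    have hlp : G.line x p = G.line x a := G.line_eq_of_mem hpa hpx
    have hlq : G.line x q = G.line x b := G.line_eq_of_mem hqb hqx
    have hxa : x ≠ a := fun h => hxt (h ▸ hat)
    have hxb : x ≠ b := fun h => hxt (h ▸ hbt)
    by_cases hll : G.line x p = G.line x q
    · have hqmem : q ∈ G.line x p := by rw [hll]; exact G.right_mem_line x q
      have hline : G.line p q = G.line x p :=
        G.line_unique x p p q (Ne.symm hpx) (G.right_mem_line x p) hqmem hpq
      have hy2 : y ∈ G.line x a := by rw [← hlp, ← hline]; exact hy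
      exact (hmemC y).2 (Or.inr ⟨a, hat, hy2⟩)
    have hab : a ≠ b := fun h => hll (by rw [hlp, hlq, h])
    by_cases hpt : p ∈ t
    · by_cases hqt : q ∈ t
      · exact htC (ht p hpt q hqt hy)
      · have hbq : b ≠ q := fun h => hqt (h ▸ hbt)
        have hbp : b ≠ p := fun h => hll (by rw [hlq, h])
        have hqyp : q ∈ G.line y p := by
          have h1 : G.line p y = G.line p q := G.line_eq_of_mem hy hyp
          rw [G.line_symm, h1]
          exact G.right_mem_line p q
        obtain ⟨c, hc1, hc2⟩ := G.veblen x b y p q hxb (fun h => hyp h) (Ne.symm hyx)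
          (Ne.symm hbp).symm hqb hqyp
        have hct : c ∈ t := ht b hbt p hpt hc2
        have hcx : c ≠ x := fun h => hxt (h ▸ hct)
        have hy3 : y ∈ G.line x c := by
          rw [G.line_eq_of_mem hc1 hcx]
          exact G.right_mem_line x y
        exact (hmemC y).2 (Or.inr ⟨c, hct, hy3⟩)
    · by_cases hqt : q ∈ t
      · have hap : a ≠ p := fun h => hpt (h ▸ hat)
        have haq : a ≠ q := fun h => hll (by rw [hlp, h])
        have hpyq : p ∈ G.line y q := by
          have h1 : G.line q y = G.line q p := by
            apply G.line_eq_of_mem _ hyq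
            rw [G.line_symm]
            exact hy
          rw [G.line_symm, h1]
          exact G.right_mem_line q p
        obtain ⟨c, hc1, hc2⟩ := G.veblen x a y q p hxa (fun h => hyq h) (Ne.symm hyx)
          haq hpa hpyq
        have hct : c ∈ t := ht a hat q hqt hc2
        have hcx : c ≠ x := fun h => hxt (h ▸ hct)
        have hy3 : y ∈ G.line x c := by
          rw [G.line_eq_of_mem hc1 hcx]
          exact G.right_mem_line x y
        exact (hmemC y).2 (Or.inr ⟨c, hct, hy3⟩)
      · have hap : a ≠ p := fun h => hpt (h ▸ hat)
        have hbq : b ≠ q := fun h => hqt (h ▸ hbt)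
        have hxap : x ∈ G.line a p := by
          have h1 : G.line a p = G.line x a :=
            G.line_unique x a a p hxa (G.right_mem_line x a) hpa hap
          rw [h1]
          exact G.left_mem_line x a
        have hxbq : x ∈ G.line b q := by
          have h1 : G.line b q = G.line x b :=
            G.line_unique x b b q hxb (G.right_mem_line x b) hqb hbq
          rw [h1]
          exact G.left_mem_line x b
        obtain ⟨w, hw1, hw2⟩ := G.veblen a p b q x hap hbq hab hpq hxap hxbq
        have hwt : w ∈ t := ht a hat b hbt hw1
        by_cases hwy : w = y
        · exact htC (hwy ▸ hwt)
        by_cases haw : a = w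
        · have hapq : a ∈ G.line p q := haw ▸ hw2
          have h1 : G.line p a = G.line p q := G.line_eq_of_mem hapq hap
          have hx_pq : x ∈ G.line p q := by
            rw [← h1, G.line_symm]
            exact hxap
          have h2 : G.line p x = G.line p q :=
            G.line_unique p q p x hpq (G.left_mem_line p q) hx_pq hpx
          have hy2 : y ∈ G.line x a := by
            rw [← hlp, G.line_symm, h2]
            exact hy
          exact (hmemC y).2 (Or.inr ⟨a, hat, hy2⟩)
        · have hpyw : p ∈ G.line y w := by
            have h1 : G.line y w = G.line p q :=
              G.line_unique p q y w hpq hy hw2 (fun h => hwy h.symm)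
            rw [h1]
            exact G.left_mem_line p q
          obtain ⟨c, hc1, hc2⟩ := G.veblen x a y w p hxa (fun h => hwy h.symm)
            (Ne.symm hyx) haw hpa hpyw
          have hct : c ∈ t := ht a hat w hwt hc2
          have hcx : c ≠ x := fun h => hxt (h ▸ hct)
          have hy3 : y ∈ G.line x c := by
            rw [G.line_eq_of_mem hc1 hcx]
            exact G.right_mem_line x y
          exact (hmemC y).2 (Or.inr ⟨c, hct, hy3⟩)
  apply Set.Subset.antisymm
  · exact G.span_le hflatC (Set.union_subset htC (Set.singleton_subset_iff.2 hxC))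
  · apply Set.union_subset
    · exact Set.singleton_subset_iff.2 (G.subset_span _ (Set.mem_union_right _ (Set.mem_singleton _)))
    · refine Set.iUnion₂_subset fun a ha => ?_
      exact G.isFlat_span (t ∪ {x}) x (G.subset_span _ (Set.mem_union_right _ (Set.mem_singleton _)))
        a (G.subset_span _ (Set.mem_union_left _ ha))

lemma span_hyperplane_union_univ {h0 : Set P} (hh : G.IsHyperplane h0) {x : P}
    (hx : x ∉ h0) : G.span (h0 ∪ {x}) = Set.univ := by
  rcases hh.2.2 _ (G.isFlat_span _)
      ((Set.subset_union_left).trans (G.subset_span _)) with hcon | h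
  · exact absurd (hcon ▸ G.subset_span _ (Set.mem_union_right _ (Set.mem_singleton _))) hx
  · exact h

lemma line_meets_hyperplane {h0 : Set P} (hh : G.IsHyperplane h0) {p q : P}
    (hpq : p ≠ q) : ∃ z, z ∈ h0 ∧ z ∈ G.line p q := by
  by_cases hp : p ∈ h0
  · exact ⟨p, hp, G.left_mem_line p q⟩
  have huniv : G.span (h0 ∪ {p}) = Set.univ := G.span_hyperplane_union_univ hh hp
  rw [G.span_flat_union_singleton hh.1 p] at huniv
  have hq : q ∈ ({p} : Set P) ∪ ⋃ z ∈ h0, G.line p z := huniv ▸ Set.mem_univ q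
  rcases hq with hq | hq
  · exact absurd (Set.mem_singleton_iff.1 hq) (Ne.symm hpq)
  · obtain ⟨z, hz, hqz⟩ := Set.mem_iUnion₂.1 hq
    refine ⟨z, hz, ?_⟩
    rw [G.line_eq_of_mem hqz (Ne.symm hpq)]
    exact G.right_mem_line p z

lemma eq_of_mem_hyperplane_line {h0 : Set P} (hh : G.IsHyperplane h0) {x y z₁ z₂ : P}
    (hx : x ∉ h0) (h1 : z₁ ∈ h0) (h2 : z₂ ∈ h0) (m1 : z₁ ∈ G.line x y)
    (m2 : z₂ ∈ G.line x y) : z₁ = z₂ := by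
  by_contra hne
  rcases eq_or_ne x y with rfl | hxy
  · rw [G.line_self] at m1
    exact hx (Set.mem_singleton_iff.1 m1 ▸ h1)
  have : G.line z₁ z₂ = G.line x y := G.line_unique x y z₁ z₂ hxy m1 m2 hne
  have hxl : x ∈ G.line z₁ z₂ := by rw [this]; exact G.left_mem_line x y
  exact hx (hh.1 z₁ h1 z₂ h2 hxl)

lemma isHyperplane_of_copoint {F : Set P} (hF : G.IsFlat F) {a : P} (ha : a ∉ F)
    (hsp : G.span (F ∪ {a}) = Set.univ) : G.IsHyperplane F := by
  refine ⟨hF, fun h => ha (h ▸ Set.mem_univ a), fun t ht hsub => ?_⟩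
  by_cases htF : t = F
  · exact Or.inl htF
  right
  have hex : ∃ x, x ∈ t ∧ x ∉ F := by
    by_contra hcon
    push_neg at hcon
    exact htF (Set.Subset.antisymm hcon hsub)
  obtain ⟨x, hxt, hxF⟩ := hex
  have hone := hsp
  rw [G.span_flat_union_singleton hF a] at hone
  have hx2 : x ∈ ({a} : Set P) ∪ ⋃ z ∈ F, G.line a z := hone ▸ Set.mem_univ x
  have hat : a ∈ t := by
    rcases hx2 with hx2 | hx2
    · exact (Set.mem_singleton_iff.1 hx2) ▸ hxt
    obtain ⟨z, hz, hxz⟩ := Set.mem_iUnion₂.1 hx2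
    have hxz' : x ∈ G.line z a := by rw [G.line_symm]; exact hxz
    have hxne : x ≠ z := fun h => hxF (h ▸ hz)
    have : G.line z x = G.line z a := G.line_eq_of_mem hxz' hxne
    have hax : a ∈ G.line z x := by rw [this]; exact G.right_mem_line z a
    exact ht z (hsub hz) x hxt hax
  apply Set.eq_univ_of_univ_subset
  rw [← hsp]
  exact G.span_le ht (Set.union_subset hsub (Set.singleton_subset_iff.2 hat))

lemma isHyperplane_of_meets {F : Set P} (hF : G.IsFlat F) (hne : F ≠ Set.univ)
    (hmeet : ∀ p q : P, p ≠ q → ∃ z, z ∈ F ∧ z ∈ G.line p q) : G.IsHyperplane F := by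
  obtain ⟨a, ha⟩ := (Set.ne_univ_iff_exists_notMem F).1 hne
  apply G.isHyperplane_of_copoint hF ha
  apply Set.eq_univ_of_forall
  intro y
  by_cases hya : y = a
  · exact hya ▸ G.subset_span _ (Set.mem_union_right _ (Set.mem_singleton _))
  obtain ⟨z, hzF, hzl⟩ := hmeet a y (Ne.symm hya)
  by_cases hzy : z = y
  · exact G.subset_span _ (Set.mem_union_left _ (hzy ▸ hzF))
  have hza : z ≠ a := fun h => (h ▸ hzF : a ∈ F) |> ha
  have h1 : G.line a z = G.line a y := G.line_eq_of_mem hzl hza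
  have hy : y ∈ G.line a z := by rw [h1]; exact G.right_mem_line a y
  exact G.isFlat_span (F ∪ {a}) a (G.subset_span _ (Set.mem_union_right _ (Set.mem_singleton _)))
    z (G.subset_span _ (Set.mem_union_left _ hzF)) hy

lemma subset_span_inter_hyperplane {t h0 : Set P} (ht : G.IsFlat t)
    (hh : G.IsHyperplane h0) {x : P} (hxt : x ∈ t) (hxh : x ∉ h0) :
    t ⊆ G.span ((t ∩ h0) ∪ {x}) := by
  have huniv : G.span (h0 ∪ {x}) = Set.univ := G.span_hyperplane_union_univ hh hxh
  rw [G.span_flat_union_singleton hh.1 x] at huniv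
  intro q hq
  have hq2 : q ∈ ({x} : Set P) ∪ ⋃ y ∈ h0, G.line x y := huniv ▸ Set.mem_univ q
  rcases hq2 with hq2 | hq2
  · exact (Set.mem_singleton_iff.1 hq2) ▸ G.subset_span _ (Set.mem_union_right _ (Set.mem_singleton _))
  obtain ⟨y, hyh, hqy⟩ := Set.mem_iUnion₂.1 hq2
  by_cases hqx : q = x
  · exact hqx ▸ G.subset_span _ (Set.mem_union_right _ (Set.mem_singleton _))
  have h1 : G.line x q = G.line x y := G.line_eq_of_mem hqy hqx
  have hyt : y ∈ t := ht x hxt q hq (by rw [h1]; exact G.right_mem_line x y)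
  exact G.isFlat_span ((t ∩ h0) ∪ {x}) x (G.subset_span _ (Set.mem_union_right _ (Set.mem_singleton _)))
    y (G.subset_span _ (Set.mem_union_left _ ⟨hyt, hyh⟩)) hqy


lemma isHyperplane_span_inter {k h0 : Set P} (hk : G.IsHyperplane k)
    (hh : G.IsHyperplane h0) (hne : k ≠ h0) {x : P} (hx : x ∉ h0) :
    G.IsHyperplane (G.span ((k ∩ h0) ∪ {x})) := by
  by_cases hxk : x ∈ k
  · have heq : G.span ((k ∩ h0) ∪ {x}) = k := by
      apply Set.Subset.antisymm
      · exact G.span_le hk.1 (Set.union_subset Set.inter_subset_left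
          (Set.singleton_subset_iff.2 hxk))
      · exact G.subset_span_inter_hyperplane hk.1 hh hxk hx
    rw [heq]
    exact hk
  set F : Set P := G.span ((k ∩ h0) ∪ {x}) with hFdef
  have hkh0 : G.IsFlat (k ∩ h0) := G.isFlat_inter hk.1 hh.1
  have hFcone : F = {x} ∪ ⋃ c ∈ k ∩ h0, G.line x c := G.span_flat_union_singleton hkh0 x
  have hxF : x ∈ F := G.subset_span _ (Set.mem_union_right _ (Set.mem_singleton _))
  have hkhF : k ∩ h0 ⊆ F := (Set.subset_union_left).trans (G.subset_span _)
  have hzex : ∃ z, z ∈ h0 ∧ z ∉ k := by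
    by_contra hcon
    push_neg at hcon
    rcases hh.2.2 k hk.1 hcon with h | h
    · exact hne h
    · exact hk.2.1 h
  obtain ⟨z0, hz0h, hz0k⟩ := hzex
  have hz0F : z0 ∉ F := by
    rw [hFcone]
    rintro (hz | hz)
    · exact hx (Set.mem_singleton_iff.1 hz ▸ hz0h)
    obtain ⟨c, hc, hzc⟩ := Set.mem_iUnion₂.1 hz
    have hz0c : z0 ≠ c := fun h => hz0k (h ▸ hc.1)
    have hxc : x ≠ c := fun h => hx (h ▸ hc.2)
    have h1 : G.line z0 c = G.line x c := G.line_unique x c z0 c hxc hzc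
      (G.right_mem_line x c) hz0c
    have hxin : x ∈ G.line z0 c := by rw [h1]; exact G.left_mem_line x c
    exact hx (hh.1 z0 hz0h c hc.2 hxin)
  have hFne : F ≠ Set.univ := fun h => hz0F (h ▸ Set.mem_univ z0)
  refine G.isHyperplane_of_meets (G.isFlat_span _) hFne ?_
  intro p q hpq
  by_cases hxpq : x ∈ G.line p q
  · exact ⟨x, hxF, hxpq⟩
  have hpx : p ≠ x := fun h => hxpq (h ▸ G.left_mem_line p q)
  have hqx : q ≠ x := fun h => hxpq (h ▸ G.right_mem_line p q)
  obtain ⟨zp, hzph, hzpl⟩ := G.line_meets_hyperplane hh (Ne.symm hpx)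
  obtain ⟨zq, hzqh, hzql⟩ := G.line_meets_hyperplane hh (Ne.symm hqx)
  have hzpx : zp ≠ x := fun h => hx (h ▸ hzph)
  have hzqx : zq ≠ x := fun h => hx (h ▸ hzqh)
  by_cases hzpk : zp ∈ k
  · have h1 : G.line x zp = G.line x p := G.line_eq_of_mem hzpl hzpx
    have hpF : p ∈ F := by
      rw [hFcone]
      exact Set.mem_union_right _ (Set.mem_iUnion₂.2 ⟨zp, ⟨hzpk, hzph⟩,
        by rw [h1]; exact G.right_mem_line x p⟩)
    exact ⟨p, hpF, G.left_mem_line p q⟩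
  by_cases hzqk : zq ∈ k
  · have h1 : G.line x zq = G.line x q := G.line_eq_of_mem hzql hzqx
    have hqF : q ∈ F := by
      rw [hFcone]
      exact Set.mem_union_right _ (Set.mem_iUnion₂.2 ⟨zq, ⟨hzqk, hzqh⟩,
        by rw [h1]; exact G.right_mem_line x q⟩)
    exact ⟨q, hqF, G.right_mem_line p q⟩
  have hzpzq : zp ≠ zq := by
    intro h
    have h1 : G.line x zp = G.line x p := G.line_eq_of_mem hzpl hzpx
    have h2 : G.line x zq = G.line x q := G.line_eq_of_mem hzql hzqx
    have hpmem : p ∈ G.line x zp := by rw [h1]; exact G.right_mem_line x p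
    have hqmem : q ∈ G.line x zp := by rw [h, h2]; exact G.right_mem_line x q
    have h3 : G.line p q = G.line x zp :=
      G.line_unique x zp p q (Ne.symm hzpx) hpmem hqmem hpq
    exact hxpq (by rw [h3]; exact G.left_mem_line x zp)
  obtain ⟨z, hzk, hzl⟩ := G.line_meets_hyperplane hk hzpzq
  have hzh0 : z ∈ h0 := hh.1 zp hzph zq hzqh hzl
  have hzzp : z ≠ zp := fun h => hzpk (h ▸ hzk)
  have hzzq : z ≠ zq := fun h => hzqk (h ▸ hzk)
  have hxz : x ≠ z := fun h => hx (h ▸ hzh0)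
  have hzp_in : zp ∈ G.line z zq := by
    have h1 : G.line zq z = G.line zq zp :=
      G.line_eq_of_mem (by rw [G.line_symm]; exact hzl) hzzq
    rw [G.line_symm, h1]
    exact G.right_mem_line zq zp
  have hpzq : p ≠ zq := by
    intro h
    have hmem : zq ∈ G.line x p := h ▸ G.right_mem_line x p
    exact hzpzq (G.eq_of_mem_hyperplane_line hh hx hzph hzqh hzpl hmem)
  obtain ⟨y₁, hy11, hy12⟩ := G.veblen x p z zq zp (Ne.symm hpx) hzzq hxz hpzq hzpl hzp_in
  have hy1p : y₁ ≠ p := by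
    intro h
    subst h
    have h1 : G.line x y₁ = G.line x z := G.line_eq_of_mem hy11 hpx
    have hmem : z ∈ G.line x y₁ := by rw [h1]; exact G.right_mem_line x z
    exact hzzp (G.eq_of_mem_hyperplane_line hh hx hzh0 hzph hmem hzpl)
  have hy1x : y₁ ≠ x := by
    intro h
    subst h
    have h1 : G.line y₁ p = G.line p zq :=
      G.line_unique p zq y₁ p hpzq hy12 (G.left_mem_line p zq) (fun hc => hpx hc.symm)
    have hmem : zq ∈ G.line y₁ p := by rw [h1]; exact G.right_mem_line p zq
    exact hzpzq (G.eq_of_mem_hyperplane_line hh hx hzph hzqh hzpl hmem)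
  have hzq_in : zq ∈ G.line y₁ p := by
    have h1 : G.line p y₁ = G.line p zq := G.line_eq_of_mem hy12 hy1p
    rw [G.line_symm, h1]
    exact G.right_mem_line p zq
  obtain ⟨y₂, hy21, hy22⟩ := G.veblen x q y₁ p zq (Ne.symm hqx) hy1p (Ne.symm hy1x)
    (Ne.symm hpq) hzql hzq_in
  have h1 : G.line x y₁ = G.line x z := G.line_eq_of_mem hy11 hy1x
  have hy2F : y₂ ∈ F :=
    G.isFlat_span _ x hxF z (hkhF ⟨hzk, hzh0⟩) (by rw [← h1]; exact hy21)
  exact ⟨y₂, hy2F, by rw [G.line_symm]; exact hy22⟩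


/-- The key rank computation: intersecting with a hyperplane not containing a
point of the flat raises the codimension by exactly one. -/
lemma codim_inter_hyperplane_eq {t h0 : Set P} (ht : G.IsFlat t) (hh : G.IsHyperplane h0)
    {x : P} (hxt : x ∈ t) (hxh : x ∉ h0)
    (hrep : ∃ H : Finset (Set P), (∀ k ∈ H, G.IsHyperplane k) ∧ ⋂₀ ↑H = t)
    (hrep' : ∃ H : Finset (Set P), (∀ k ∈ H, G.IsHyperplane k) ∧ ⋂₀ ↑H = t ∩ h0) :
    G.codim (t ∩ h0) = G.codim t + 1 := by
  have hAne : {n : ℕ | ∃ H : Finset (Set P), H.card = n ∧ (∀ k ∈ H, G.IsHyperplane k) ∧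
      ⋂₀ ↑H = t}.Nonempty := by
    obtain ⟨H, h1, h2⟩ := hrep
    exact ⟨H.card, H, rfl, h1, h2⟩
  have hA'ne : {n : ℕ | ∃ H : Finset (Set P), H.card = n ∧ (∀ k ∈ H, G.IsHyperplane k) ∧
      ⋂₀ ↑H = t ∩ h0}.Nonempty := by
    obtain ⟨H, h1, h2⟩ := hrep'
    exact ⟨H.card, H, rfl, h1, h2⟩
  obtain ⟨H, hcard, hhyps, hint⟩ := Nat.sInf_mem hAne
  obtain ⟨H', hcard', hhyps', hint'⟩ := Nat.sInf_mem hA'ne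
  have hcodim : G.codim t = H.card := hcard.symm
  have hcodim' : G.codim (t ∩ h0) = H'.card := hcard'.symm
  -- upper bound
  have hupper : G.codim (t ∩ h0) ≤ H.card + 1 := by
    have hmem : (insert h0 H).card ∈ {n : ℕ | ∃ H : Finset (Set P), H.card = n ∧
        (∀ k ∈ H, G.IsHyperplane k) ∧ ⋂₀ ↑H = t ∩ h0} := by
      refine ⟨insert h0 H, rfl, ?_, ?_⟩
      · intro k hk
        rcases Finset.mem_insert.1 hk with rfl | hk
        · exact hh
        · exact hhyps k hk
      · rw [Finset.coe_insert, Set.sInter_insert, hint, Set.inter_comm]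
    exact (Nat.sInf_le hmem).trans (by
      have := Finset.card_insert_le h0 H
      omega)
  -- lower bound
  have hxnot : x ∉ t ∩ h0 := fun h => hxh h.2
  have hex : ∃ k ∈ H', x ∉ k := by
    by_contra hcon
    push_neg at hcon
    exact hxnot (hint' ▸ Set.mem_sInter.2 fun k hk => hcon k hk)
  obtain ⟨h₀, hh₀, hxh₀⟩ := hex
  have hh₀hyp : G.IsHyperplane h₀ := hhyps' h₀ hh₀
  have hspan_t : G.span ((t ∩ h0) ∪ {x}) = t :=
    Set.Subset.antisymm
      (G.span_le ht (Set.union_subset Set.inter_subset_left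
        (Set.singleton_subset_iff.2 hxt)))
      (G.subset_span_inter_hyperplane ht hh hxt hxh)
  set H₂ : Finset (Set P) :=
    (H'.erase h₀).image (fun k => G.span ((k ∩ h₀) ∪ {x})) with hH₂
  have hhyps₂ : ∀ s ∈ H₂, G.IsHyperplane s := by
    intro s hs
    obtain ⟨k, hk, rfl⟩ := Finset.mem_image.1 hs
    obtain ⟨hkne, hkH'⟩ := Finset.mem_erase.1 hk
    exact G.isHyperplane_span_inter (hhyps' k hkH') hh₀hyp hkne hxh₀
  have hint₂ : ⋂₀ ↑H₂ = t := by
    apply Set.Subset.antisymm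
    · intro y hy
      by_cases hyx : y = x
      · exact hyx ▸ hxt
      obtain ⟨z, hzh₀, hzline⟩ := G.line_meets_hyperplane hh₀hyp
        (show x ≠ y from fun h => hyx h.symm)
      have hzx : z ≠ x := fun h => hxh₀ (h ▸ hzh₀)
      have hz_all : ∀ k ∈ H', z ∈ k := by
        intro k hk
        by_cases hkh : k = h₀
        · exact hkh ▸ hzh₀
        have hyk : y ∈ G.span ((k ∩ h₀) ∪ {x}) := by
          apply Set.mem_sInter.1 hy
          exact Finset.mem_coe.2 (Finset.mem_image_of_mem _
            (Finset.mem_erase.2 ⟨hkh, hk⟩))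
        rw [G.span_flat_union_singleton
          (G.isFlat_inter (hhyps' k hk).1 hh₀hyp.1) x] at hyk
        rcases hyk with hyk | hyk
        · exact absurd (Set.mem_singleton_iff.1 hyk) hyx
        obtain ⟨c, hc, hyc⟩ := Set.mem_iUnion₂.1 hyk
        have hcl : c ∈ G.line x y := by
          rw [G.line_eq_of_mem hyc hyx]
          exact G.right_mem_line x c
        have : z = c := G.eq_of_mem_hyperplane_line hh₀hyp hxh₀ hzh₀ hc.2 hzline hcl
        exact this ▸ hc.1
      have hz_t : z ∈ t ∩ h0 := by
        rw [← hint']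
        exact Set.mem_sInter.2 fun k hk => hz_all k (Finset.mem_coe.1 hk)
      have hyl : y ∈ G.line x z := by
        rw [G.line_eq_of_mem hzline hzx]
        exact G.right_mem_line x y
      exact ht x hxt z hz_t.1 hyl
    · intro y hy
      apply Set.mem_sInter.2
      intro s hs
      obtain ⟨k, hk, rfl⟩ := Finset.mem_image.1 (Finset.mem_coe.1 hs)
      obtain ⟨hkne, hkH'⟩ := Finset.mem_erase.1 hk
      have hsub : t ∩ h0 ⊆ k ∩ h₀ := by
        rw [← hint']
        exact Set.subset_inter (Set.sInter_subset_of_mem (Finset.mem_coe.2 hkH'))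
          (Set.sInter_subset_of_mem (Finset.mem_coe.2 hh₀))
      have hy2 : y ∈ G.span ((t ∩ h0) ∪ {x}) := by rw [hspan_t]; exact hy
      exact G.span_mono (Set.union_subset_union_left _ hsub) hy2
  have hlow : G.codim t ≤ H₂.card := Nat.sInf_le ⟨H₂, rfl, hhyps₂, hint₂⟩
  have hcard₂ : H₂.card ≤ H'.card - 1 := by
    calc H₂.card ≤ (H'.erase h₀).card := Finset.card_image_le
    _ = H'.card - 1 := Finset.card_erase_of_mem hh₀
  have hpos : 1 ≤ H'.card := Finset.card_pos.2 ⟨h₀, hh₀⟩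
  omega

lemma nu_notMem_span {N : Type*} {ν : N → P} (hind : G.Indep (Set.range ν))
    {v w : N} {p : P} (hp : p ∈ G.line (ν v) (ν w)) (hpr : p ∉ Set.range ν)
    {B : Set P} (hB : B ⊆ Set.range ν \ {ν v, ν w}) :
    ν v ∉ G.span (B ∪ {p}) := by
  have hBv : B ⊆ Set.range ν \ {ν v} := by
    intro b hb
    exact ⟨(hB hb).1, fun hc => (hB hb).2
      (Set.mem_insert_iff.2 (Or.inl (Set.mem_singleton_iff.1 hc)))⟩
  have hBw : B ⊆ Set.range ν \ {ν w} := by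
    intro b hb
    exact ⟨(hB hb).1, fun hc => (hB hb).2
      (Set.mem_insert_iff.2 (Or.inr hc))⟩
  have hvB : ν v ∉ G.span B := fun h => hind (ν v) ⟨v, rfl⟩ (G.span_mono hBv h)
  have hwB : ν w ∉ G.span B := fun h => hind (ν w) ⟨w, rfl⟩ (G.span_mono hBw h)
  intro hmem
  rw [← G.span_span_union B {p},
    G.span_flat_union_singleton (G.isFlat_span B) p] at hmem
  have hvp : ν v ≠ p := fun h => hpr ⟨v, h⟩
  rcases hmem with hmem | hmem
  · exact hvp (Set.mem_singleton_iff.1 hmem)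
  obtain ⟨z, hz, hvz⟩ := Set.mem_iUnion₂.1 hmem
  have hvzne : ν v ≠ z := fun h => hvB (h ▸ hz)
  have h1 : G.line p (ν v) = G.line p z := G.line_eq_of_mem hvz hvp
  have hzmem : z ∈ G.line (ν v) p := by
    rw [G.line_symm, h1]
    exact G.right_mem_line p z
  have h2 : G.line (ν v) p = G.line (ν v) (ν w) := G.line_eq_of_mem hp (Ne.symm hvp)
  have hz_line : z ∈ G.line (ν v) (ν w) := h2 ▸ hzmem
  have h3 : G.line (ν v) z = G.line (ν v) (ν w) := G.line_eq_of_mem hz_line hvzne.symm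
  have hwz : ν w ∈ G.line (ν v) z := by
    rw [h3]
    exact G.right_mem_line (ν v) (ν w)
  have hw_in : ν w ∈ G.span ({ν v} ∪ B) :=
    G.isFlat_span ({ν v} ∪ B) (ν v)
      (G.subset_span _ (Set.mem_union_left _ (Set.mem_singleton _)))
      z (G.span_mono Set.subset_union_right hz) hwz
  have hvw' : ν v ≠ ν w := by
    intro hvw
    have hpp : p ∈ G.line (ν v) (ν v) := by rw [hvw] at hp ⊢; exact hp
    rw [G.line_self] at hpp
    exact hvp (Set.mem_singleton_iff.1 hpp).symm
  have hsub2 : ({ν v} : Set P) ∪ B ⊆ Set.range ν \ {ν w} := by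
    intro b hb
    rcases hb with hb | hb
    · rw [Set.mem_singleton_iff.1 hb]
      exact ⟨⟨v, rfl⟩, fun hc => hvw' (Set.mem_singleton_iff.1 hc)⟩
    · exact hBw hb
  exact hind (ν w) ⟨w, rfl⟩ (G.span_mono hsub2 hw_in)


lemma isFlat_cevHyp {N E : Type*} (ν : N → P) (Γ : MGraph N E) (apex : E → P) (e : E) :
    G.IsFlat (G.cevHyp ν Γ apex e) := by
  unfold cevHyp
  split_ifs <;> exact G.isFlat_span _

lemma mem_cevHyp_of_notMem_ends {N E : Type*} (ν : N → P) (Γ : MGraph N E)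
    (apex : E → P) (e : E) {v : N} (hv : v ∉ Γ.ends e) :
    ν v ∈ G.cevHyp ν Γ apex e := by
  unfold cevHyp
  split_ifs
  · exact G.subset_span _ (Set.mem_union_left _ ⟨v, hv, rfl⟩)
  · exact G.subset_span _ ⟨v, hv, rfl⟩

lemma isHyperplane_cevHyp {N E : Type*} {ν : N → P} (hν : Function.Injective ν)
    (hind : G.Indep (Set.range ν)) (hsp : G.span (Set.range ν) = Set.univ)
    {Γ : MGraph N E} {apex : E → P} (hcev : G.IsCevian ν Γ apex) (e : E) :
    G.IsHyperplane (G.cevHyp ν Γ apex e) := by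
  rcases hcev e with ⟨v, w, hvw, hends, hline, hnr⟩ | ⟨v, hends, _⟩
  · have hl : Γ.IsLink e := by
      rw [MGraph.IsLink, hends]
      exact Finset.card_pair hvw
    unfold cevHyp
    rw [if_pos hl]
    set B : Set P := ν '' {u : N | u ∉ Γ.ends e} with hB
    have hBsub : B ⊆ Set.range ν \ {ν v, ν w} := by
      rintro b ⟨u, hu, rfl⟩
      refine ⟨⟨u, rfl⟩, fun hc => hu ?_⟩
      rw [hends]
      rcases Set.mem_insert_iff.1 hc with hc | hc
      · exact Finset.mem_insert.2 (Or.inl (hν hc))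
      · exact Finset.mem_insert.2 (Or.inr (Finset.mem_singleton.2
          (hν (Set.mem_singleton_iff.1 hc))))
    have hproper : ν v ∉ G.span (B ∪ {apex e}) :=
      G.nu_notMem_span hind hline hnr hBsub
    apply G.isHyperplane_of_copoint (G.isFlat_span _) hproper
    apply Set.eq_univ_of_univ_subset
    rw [← hsp]
    apply G.span_le (G.isFlat_span _)
    rintro _ ⟨u, rfl⟩
    by_cases hu : u ∈ Γ.ends e
    · rw [hends] at hu
      have hvmem : ν v ∈ G.span (G.span (B ∪ {apex e}) ∪ {ν v}) :=
        G.subset_span _ (Set.mem_union_right _ (Set.mem_singleton _))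
      have hamem : apex e ∈ G.span (G.span (B ∪ {apex e}) ∪ {ν v}) :=
        G.subset_span _ (Set.mem_union_left _ (G.subset_span _
          (Set.mem_union_right _ (Set.mem_singleton _))))
      rcases Finset.mem_insert.1 hu with rfl | hu
      · exact hvmem
      · rw [Finset.mem_singleton.1 hu]
        have hav : apex e ≠ ν v := fun h => hnr ⟨v, h.symm⟩
        have h1 : G.line (ν v) (apex e) = G.line (ν v) (ν w) :=
          G.line_eq_of_mem hline hav
        have hwmem : ν w ∈ G.line (ν v) (apex e) := by
          rw [h1]; exact G.right_mem_line _ _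
        exact G.isFlat_span _ (ν v) hvmem (apex e) hamem hwmem
    · exact G.subset_span _ (Set.mem_union_left _ (G.subset_span _
        (Set.mem_union_left _ ⟨u, hu, rfl⟩)))
  · have hl : ¬ Γ.IsLink e := by
      rw [MGraph.IsLink, hends]
      simp
    unfold cevHyp
    rw [if_neg hl]
    set B : Set P := ν '' {u : N | u ∉ Γ.ends e} with hB
    have hBsub : B ⊆ Set.range ν \ {ν v} := by
      rintro b ⟨u, hu, rfl⟩
      refine ⟨⟨u, rfl⟩, fun hc => hu ?_⟩
      rw [hends]
      exact Finset.mem_singleton.2 (hν (Set.mem_singleton_iff.1 hc))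
    have hproper : ν v ∉ G.span B := fun h =>
      hind (ν v) ⟨v, rfl⟩ (G.span_mono hBsub h)
    apply G.isHyperplane_of_copoint (G.isFlat_span _) hproper
    apply Set.eq_univ_of_univ_subset
    rw [← hsp]
    apply G.span_le (G.isFlat_span _)
    rintro _ ⟨u, rfl⟩
    by_cases hu : u ∈ Γ.ends e
    · rw [hends] at hu
      rw [Finset.mem_singleton.1 hu]
      exact G.subset_span _ (Set.mem_union_right _ (Set.mem_singleton _))
    · exact G.subset_span _ (Set.mem_union_left _ (G.subset_span _ ⟨u, hu, rfl⟩))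

lemma notMem_cevHyp {N E : Type*} {ν : N → P} (hν : Function.Injective ν)
    (hind : G.Indep (Set.range ν)) {Γ : MGraph N E} {apex : E → P}
    (hcev : G.IsCevian ν Γ apex) {e : E} (hlink : Γ.IsLink e) {v : N}
    (hv : v ∈ Γ.ends e) : ν v ∉ G.cevHyp ν Γ apex e := by
  rcases hcev e with ⟨a, b, hab, hends, hline, hnr⟩ | ⟨a, hends, _⟩
  · unfold cevHyp
    rw [if_pos hlink]
    set B : Set P := ν '' {u : N | u ∉ Γ.ends e} with hB
    have hBsub : B ⊆ Set.range ν \ {ν a, ν b} := by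
      rintro x ⟨u, hu, rfl⟩
      refine ⟨⟨u, rfl⟩, fun hc => hu ?_⟩
      rw [hends]
      rcases Set.mem_insert_iff.1 hc with hc | hc
      · exact Finset.mem_insert.2 (Or.inl (hν hc))
      · exact Finset.mem_insert.2 (Or.inr (Finset.mem_singleton.2
          (hν (Set.mem_singleton_iff.1 hc))))
    have hBsub' : B ⊆ Set.range ν \ {ν b, ν a} := by
      intro x hx
      refine ⟨(hBsub hx).1, fun hc => (hBsub hx).2 ?_⟩
      rcases Set.mem_insert_iff.1 hc with h | h
      · exact Set.mem_insert_iff.2 (Or.inr (Set.mem_singleton_iff.2 h))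
      · exact Set.mem_insert_iff.2 (Or.inl (Set.mem_singleton_iff.1 h))
    rw [hends] at hv
    rcases Finset.mem_insert.1 hv with rfl | hv
    · exact G.nu_notMem_span hind hline hnr hBsub
    · rw [Finset.mem_singleton.1 hv]
      have hline' : apex e ∈ G.line (ν b) (ν a) := by rw [G.line_symm]; exact hline
      exact G.nu_notMem_span hind hline' hnr hBsub'
  · exfalso
    rw [MGraph.IsLink, hends] at hlink
    simp at hlink


end ProjGeom

/-! ## Statement 8 -/

/-- Pendance Reduction.  Let `A` be a Cevian arrangement of
apical hyperplanes over a point basis `N̂ = ν(N)` of a projective geometry, with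
associated graph `Γ` and rank function `rk_P(S) = codim ⋂_{e∈S} h(ê)`.  If an
edge set `S` has a pendant edge `e` (a link one of whose endpoints meets no other
edge of `S`), then `rk_P(S) = rk_P(S∖e) + 1`. -/
theorem stmt8 {P N E : Type*} (G : ProjGeom P) (ν : N → P)
    (hν : Function.Injective ν) (hind : G.Indep (Set.range ν))
    (hspan : G.span (Set.range ν) = Set.univ)
    (Γ : MGraph N E) (apex : E → P) (hcev : G.IsCevian ν Γ apex)
    (S : Finset E) (e : E) (heS : e ∈ S) (hlink : Γ.IsLink e)
    (hpend : ∃ v ∈ Γ.ends e, ∀ f ∈ S, f ≠ e → v ∉ Γ.ends f) :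
    G.cevRk ν Γ apex S = G.cevRk ν Γ apex (S.erase e) + 1 := by
  classical
  obtain ⟨v, hvends, hvpend⟩ := hpend
  have hhyp : ∀ f : E, G.IsHyperplane (G.cevHyp ν Γ apex f) :=
    fun f => G.isHyperplane_cevHyp hν hind hspan hcev f
  have hteq : (⋂ f ∈ S, G.cevHyp ν Γ apex f) =
      (⋂ f ∈ S.erase e, G.cevHyp ν Γ apex f) ∩ G.cevHyp ν Γ apex e := by
    conv_lhs => rw [← Finset.insert_erase heS]
    rw [Finset.set_biInter_insert, Set.inter_comm]
  have htflat : G.IsFlat (⋂ f ∈ S.erase e, G.cevHyp ν Γ apex f) :=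
    G.isFlat_biInter fun f _ => G.isFlat_cevHyp ν Γ apex f
  have hx_t : ν v ∈ ⋂ f ∈ S.erase e, G.cevHyp ν Γ apex f := by
    apply Set.mem_iInter₂.2
    intro f hf
    obtain ⟨hfe, hfS⟩ := Finset.mem_erase.1 hf
    exact G.mem_cevHyp_of_notMem_ends ν Γ apex f (hvpend f hfS hfe)
  have hx_he : ν v ∉ G.cevHyp ν Γ apex e := G.notMem_cevHyp hν hind hcev hlink hvends
  have hrep : ∀ T : Finset E, ∃ H : Finset (Set P), (∀ k ∈ H, G.IsHyperplane k) ∧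
      ⋂₀ ↑H = ⋂ f ∈ T, G.cevHyp ν Γ apex f := by
    intro T
    refine ⟨T.image (G.cevHyp ν Γ apex), ?_, ?_⟩
    · intro k hk
      obtain ⟨f, _, rfl⟩ := Finset.mem_image.1 hk
      exact hhyp f
    · rw [Finset.coe_image, Set.sInter_image]
      rfl
  obtain ⟨H1, hH1a, hH1b⟩ := hrep S
  simp only [ProjGeom.cevRk]
  rw [hteq]
  exact G.codim_inter_hyperplane_eq htflat (hhyp e) hx_t hx_he
    (hrep (S.erase e)) ⟨H1, hH1a, by rw [hH1b, hteq]⟩
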